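/- For positive integers m, L, B, the cardinality of the difference set W(m, L, B) − W(m, L, B) (in ℤ^m) equals Σ_{k=0}^{min(m,L)} binomial(m, k) · |W(k, L − k, B − 1)| · |W(m − k, L, B)|. -/

import Mathlib

open scoped Pointwise
open Finset

private noncomputable def Wz (B L m : ℕ) : Finset (Fin m → ℤ) :=
  (Fintype.piFinset fun _ => Finset.Icc (0:ℤ) (B:ℤ)).filter fun x => ∑ i, x i ≤ (L:ℤ)

private noncomputable def Dz (B L m : ℕ) : Finset (Fin m → ℤ) :=
  (Fintype.piFinset fun _ => Finset.Icc (-(B:ℤ)) (B:ℤ)).filter fun z =>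
    (∑ i, max (z i) 0 ≤ (L:ℤ)) ∧ (∑ i, max (-z i) 0 ≤ (L:ℤ))

private def Wn (m c b : ℕ) : Finset (Fin m → ℕ) :=
  (Fintype.piFinset fun _ => Finset.range (b+1)).filter fun x => ∑ i, x i ≤ c

private lemma mem_Wz {B L m : ℕ} {x : Fin m → ℤ} :
    x ∈ Wz B L m ↔ (∀ i, 0 ≤ x i ∧ x i ≤ (B:ℤ)) ∧ ∑ i, x i ≤ (L:ℤ) := by
  simp [Wz, Fintype.mem_piFinset]

private lemma mem_Dz {B L m : ℕ} {z : Fin m → ℤ} :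
    z ∈ Dz B L m ↔ (∀ i, -(B:ℤ) ≤ z i ∧ z i ≤ (B:ℤ)) ∧
      (∑ i, max (z i) 0 ≤ (L:ℤ)) ∧ (∑ i, max (-z i) 0 ≤ (L:ℤ)) := by
  simp [Dz, Fintype.mem_piFinset]

private lemma mem_Wn {m c b : ℕ} {x : Fin m → ℕ} :
    x ∈ Wn m c b ↔ (∀ i, x i ≤ b) ∧ ∑ i, x i ≤ c := by
  simp [Wn, Fintype.mem_piFinset, Nat.lt_succ_iff]

private lemma max_sub_max (a : ℤ) : max a 0 - max (-a) 0 = a := by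
  rcases le_total a 0 with h | h
  · simp [max_eq_right h, max_eq_left (neg_nonneg.mpr h)]
  · simp [max_eq_left h, max_eq_right (neg_nonpos.mpr h)]

private lemma WsubW (B L m : ℕ) : Wz B L m - Wz B L m = Dz B L m := by
  ext z
  simp only [Finset.mem_sub]
  constructor
  · rintro ⟨u, hu, v, hv, rfl⟩
    rw [mem_Wz] at hu hv
    rw [mem_Dz]
    refine ⟨fun i => ⟨?_, ?_⟩, ?_, ?_⟩
    · have := (hu.1 i).1; have := (hv.1 i).2; simp only [Pi.sub_apply]; omega
    · have := (hu.1 i).2; have := (hv.1 i).1; simp only [Pi.sub_apply]; omega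
    · refine le_trans (Finset.sum_le_sum fun i _ => ?_) hu.2
      have := (hu.1 i).1; have := (hv.1 i).1; simp only [Pi.sub_apply]
      rcases le_total (u i - v i) 0 with h | h
      · rw [max_eq_right h]; omega
      · rw [max_eq_left h]; omega
    · refine le_trans (Finset.sum_le_sum fun i _ => ?_) hv.2
      have := (hu.1 i).1; have := (hv.1 i).1; simp only [Pi.sub_apply]
      rcases le_total (-(u i - v i)) 0 with h | h
      · rw [max_eq_right h]; omega
      · rw [max_eq_left h]; omega
  · intro hz
    rw [mem_Dz] at hz
    refine ⟨fun i => max (z i) 0, ?_, fun i => max (-z i) 0, ?_, ?_⟩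
    · rw [mem_Wz]
      refine ⟨fun i => ⟨le_max_right _ _, ?_⟩, hz.2.1⟩
      have := (hz.1 i).2; rcases le_total (z i) 0 with h | h
      · rw [max_eq_right h]; positivity
      · rw [max_eq_left h]; omega
    · rw [mem_Wz]
      refine ⟨fun i => ⟨le_max_right _ _, ?_⟩, hz.2.2⟩
      have := (hz.1 i).1; rcases le_total (-(z i)) 0 with h | h
      · rw [max_eq_right h]; positivity
      · rw [max_eq_left h]; omega
    · funext i; exact max_sub_max (z i)

private lemma sum_pos_part {m : ℕ} (z : Fin m → ℤ) (S : Finset (Fin m))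
    (hpos : ∀ i, i ∈ S ↔ 0 < z i) :
    ∑ i, max (z i) 0 = ∑ i ∈ S, z i := by
  rw [← Finset.sum_subset (Finset.subset_univ S) (fun i _ hi => ?_)]
  · exact Finset.sum_congr rfl fun i hi => max_eq_left ((hpos i).mp hi).le
  · exact max_eq_right (by have := (hpos i).not.mp hi; omega)

private lemma sum_neg_part {m : ℕ} (z : Fin m → ℤ) (S : Finset (Fin m))
    (hpos : ∀ i, i ∈ S ↔ 0 < z i) :
    ∑ i, max (-z i) 0 = ∑ i ∈ Sᶜ, -z i := by
  rw [← Finset.sum_subset (Finset.subset_univ Sᶜ) (fun i _ hi => ?_)]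
  · refine Finset.sum_congr rfl fun i hi => max_eq_left ?_
    rw [Finset.mem_compl] at hi
    have := (hpos i).not.mp hi; omega
  · rw [Finset.mem_compl, not_not] at hi
    have := (hpos i).mp hi; exact max_eq_right (by omega)

private lemma sum_over_S {m k : ℕ} (S : Finset (Fin m)) (hS : S.card = k)
    (g : Fin m → ℤ) :
    ∑ i ∈ S, g i = ∑ j : Fin k, g (S.orderIsoOfFin hS j) := by
  rw [← Finset.sum_coe_sort S (fun i => g i)]
  exact (Fintype.sum_equiv (S.orderIsoOfFin hS).toEquiv _ _ (fun j => rfl)).symm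

private lemma fiber_card (B L : ℕ) (hB : 0 < B) {m k : ℕ} (S : Finset (Fin m))
    (hS : S.card = k) (hkL : k ≤ L) :
    ((Dz B L m).filter fun z => Finset.univ.filter (fun i => 0 < z i) = S).card
      = (Wn k (L-k) (B-1)).card * (Wn (m-k) L B).card := by
  have hSc : Sᶜ.card = m - k := by
    rw [Finset.card_compl, hS, Fintype.card_fin]
  set e := S.orderIsoOfFin hS with he
  set f := Sᶜ.orderIsoOfFin hSc with hf
  rw [← Finset.card_product]
  refine Finset.card_bij'
    (fun z _ => (fun j => (z (e j) - 1).toNat, fun j => (-(z (f j))).toNat))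
    (fun p _ => fun i => if h : i ∈ S then ((p.1 (e.symm ⟨i, h⟩) : ℤ) + 1)
      else -(p.2 (f.symm ⟨i, Finset.mem_compl.mpr h⟩))) ?_ ?_ ?_ ?_
  · -- forward maps into product
    intro z hz
    rw [Finset.mem_filter] at hz
    obtain ⟨hzD, hfS⟩ := hz
    rw [mem_Dz] at hzD
    have hpos : ∀ i, i ∈ S ↔ 0 < z i := by
      intro i; rw [← hfS]; simp
    have hposS : ∀ j : Fin k, 1 ≤ z (e j) := fun j => (hpos _).mp (e j).2
    have hnegS : ∀ j : Fin (m-k), z (f j) ≤ 0 := by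
      intro j
      have := (hpos (f j)).not.mp (Finset.mem_compl.mp (f j).2); omega
    rw [Finset.mem_product]
    constructor
    · rw [mem_Wn]
      constructor
      · intro j
        show (z (e j) - 1).toNat ≤ B - 1
        have h1 := (hzD.1 (e j)).2
        omega
      · have hsum : ∑ i, max (z i) 0 = ∑ j : Fin k, z (e j) := by
          rw [sum_pos_part z S hpos, sum_over_S S hS]
        have hcast : ((∑ j : Fin k, (z (e j) - 1).toNat : ℕ) : ℤ)
            = ∑ j : Fin k, (z (e j) - 1) := by
          rw [Nat.cast_sum]
          exact Finset.sum_congr rfl fun j _ =>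
            Int.toNat_of_nonneg (by have := hposS j; omega)
        have hle : ∑ j : Fin k, (z (e j) - 1) ≤ (L : ℤ) - k := by
          rw [Finset.sum_sub_distrib, Finset.sum_const, Finset.card_univ, Fintype.card_fin,
            nsmul_eq_mul, mul_one]
          have hb : ∑ j : Fin k, z (e j) ≤ (L : ℤ) := by rw [← hsum]; exact hzD.2.1
          omega
        have : ((∑ j : Fin k, (z (e j) - 1).toNat : ℕ) : ℤ) ≤ ((L - k : ℕ) : ℤ) := by
          rw [hcast, Nat.cast_sub hkL]; exact hle
        exact_mod_cast this
    · rw [mem_Wn]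
      constructor
      · intro j
        show (-(z (f j))).toNat ≤ B
        have h1 := (hzD.1 (f j)).1
        omega
      · have hsum : ∑ i, max (-z i) 0 = ∑ j : Fin (m-k), -z (f j) := by
          rw [sum_neg_part z S hpos, sum_over_S Sᶜ hSc]
        have hcast : ((∑ j : Fin (m-k), (-(z (f j))).toNat : ℕ) : ℤ)
            = ∑ j : Fin (m-k), -z (f j) := by
          rw [Nat.cast_sum]
          exact Finset.sum_congr rfl fun j _ =>
            Int.toNat_of_nonneg (by have := hnegS j; omega)
        have : ((∑ j : Fin (m-k), (-(z (f j))).toNat : ℕ) : ℤ) ≤ (L : ℤ) := by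
          rw [hcast, ← hsum]; exact hzD.2.2
        exact_mod_cast this
  · -- backward maps into fiber
    intro p hp
    rw [Finset.mem_product, mem_Wn, mem_Wn] at hp
    obtain ⟨⟨hx1, hx2⟩, hy1, hy2⟩ := hp
    set z : Fin m → ℤ := fun i => if h : i ∈ S then ((p.1 (e.symm ⟨i, h⟩) : ℤ) + 1)
      else -(p.2 (f.symm ⟨i, Finset.mem_compl.mpr h⟩)) with hzdef
    have hpos : ∀ i, i ∈ S ↔ 0 < z i := by
      intro i
      by_cases h : i ∈ S
      · simp only [hzdef, dif_pos h, iff_true_intro h, true_iff]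
        omega
      · simp only [hzdef, dif_neg h, iff_false_intro h, false_iff, not_lt]
        omega
    have hzS : ∀ j : Fin k, z (e j) = (p.1 (e.symm (e j)) : ℤ) + 1 := by
      intro j
      simp only [hzdef, dif_pos (e j).2]
    have hzSc : ∀ j : Fin (m-k), z (f j) = -(p.2 (f.symm (f j)) : ℤ) := by
      intro j
      have h2 : (f j : Fin m) ∉ S := Finset.mem_compl.mp (f j).2
      simp only [hzdef, dif_neg h2]
    rw [Finset.mem_filter, mem_Dz]
    refine ⟨⟨fun i => ?_, ?_, ?_⟩, ?_⟩
    · by_cases h : i ∈ S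
      · simp only [hzdef, dif_pos h]
        have := hx1 (e.symm ⟨i, h⟩)
        constructor <;> omega
      · simp only [hzdef, dif_neg h]
        have := hy1 (f.symm ⟨i, Finset.mem_compl.mpr h⟩)
        constructor <;> omega
    · rw [sum_pos_part z S hpos, sum_over_S S hS]
      have h1 : ∑ j : Fin k, z (e j) = ∑ j : Fin k, ((p.1 j : ℤ) + 1) :=
        Finset.sum_congr rfl fun j _ => by rw [hzS j, e.symm_apply_apply]
      rw [h1, Finset.sum_add_distrib, Finset.sum_const, Finset.card_univ, Fintype.card_fin,
        nsmul_eq_mul, mul_one]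
      have h2 : ((∑ j : Fin k, p.1 j : ℕ) : ℤ) = ∑ j : Fin k, (p.1 j : ℤ) := Nat.cast_sum _ _
      omega
    · rw [sum_neg_part z S hpos, sum_over_S Sᶜ hSc]
      have h1 : ∑ j : Fin (m-k), -z (f j) = ∑ j : Fin (m-k), (p.2 j : ℤ) :=
        Finset.sum_congr rfl fun j _ => by rw [hzSc j, f.symm_apply_apply, neg_neg]
      have h2 : ((∑ j : Fin (m-k), p.2 j : ℕ) : ℤ) = ∑ j : Fin (m-k), (p.2 j : ℤ) :=
        Nat.cast_sum _ _
      rw [h1]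
      omega
    · ext i
      simp only [Finset.mem_filter, Finset.mem_univ, true_and]
      exact (hpos i).symm
  · -- left inverse
    intro z hz
    rw [Finset.mem_filter] at hz
    obtain ⟨hzD, hfS⟩ := hz
    have hpos : ∀ i, i ∈ S ↔ 0 < z i := by
      intro i; rw [← hfS]; simp
    funext i
    by_cases h : i ∈ S
    · simp only [dif_pos h, e.apply_symm_apply]
      have h1 : (1:ℤ) ≤ z i := (hpos i).mp h
      show ((z i - 1).toNat : ℤ) + 1 = z i
      omega
    · simp only [dif_neg h, f.apply_symm_apply]
      have h1 : z i ≤ 0 := by have := (hpos i).not.mp h; omega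
      show -(((-z i).toNat : ℤ)) = z i
      omega
  · -- right inverse
    intro p hp
    ext j
    · simp only [dif_pos (e j).2, Subtype.coe_eta, e.symm_apply_apply]
      omega
    · have h2 : (f j : Fin m) ∉ S := Finset.mem_compl.mp (f j).2
      simp only [dif_neg h2, Subtype.coe_eta, f.symm_apply_apply]
      omega

private lemma Dz_card (B L m : ℕ) (hB : 0 < B) :
    (Dz B L m).card = ∑ k ∈ Finset.range (min m L + 1),
      m.choose k * (Wn k (L-k) (B-1)).card * (Wn (m-k) L B).card := by
  rw [Finset.card_eq_sum_card_fiberwise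
    (f := fun z => Finset.univ.filter fun i => 0 < z i)
    (t := (Finset.univ : Finset (Fin m)).powerset)
    (fun z _ => Finset.mem_powerset.mpr (Finset.subset_univ _))]
  rw [Finset.sum_powerset, Finset.card_univ, Fintype.card_fin]
  rw [← Finset.sum_subset (Finset.range_subset_range.mpr (by omega : min m L + 1 ≤ m + 1))
      (fun k hk hk' => ?_)]
  · refine Finset.sum_congr rfl fun k hk => ?_
    rw [Finset.mem_range] at hk
    have hkL : k ≤ L := by omega
    rw [Finset.sum_congr rfl (fun S hS => fiber_card B L hB S
      ((Finset.mem_powersetCard.mp hS).2) hkL)]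
    rw [Finset.sum_const, Finset.card_powersetCard, Finset.card_univ, Fintype.card_fin,
      smul_eq_mul, mul_assoc]
  · -- vanishing terms : min m L < k ≤ m so L < k
    rw [Finset.mem_range] at hk hk'
    have hLk : L < k := by omega
    refine Finset.sum_eq_zero fun S hS => ?_
    rw [Finset.card_eq_zero, Finset.filter_eq_empty_iff]
    intro z hz
    rw [mem_Dz] at hz
    intro hfS
    have hScard := (Finset.mem_powersetCard.mp hS).2
    have hpos : ∀ i, i ∈ S ↔ 0 < z i := by
      intro i; rw [← hfS]; simp
    have h1 : (k : ℤ) ≤ ∑ i ∈ S, z i := by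
      have := Finset.card_nsmul_le_sum S z 1 (fun i hi => (hpos i).mp hi)
      simpa [hScard] using this
    have h2 : ∑ i ∈ S, z i ≤ (L : ℤ) := by
      rw [← sum_pos_part z S hpos]; exact hz.2.1
    omega

private lemma Wn_natCard (m c b : ℕ) :
    Nat.card {x : Fin m → ℕ // (∑ i, x i ≤ c) ∧ ∀ i, x i ≤ b} = (Wn m c b).card := by
  rw [← Fintype.card_coe (Wn m c b), ← Nat.card_eq_fintype_card]
  refine Nat.card_congr (Equiv.subtypeEquivRight fun x => ?_)
  rw [mem_Wn]; tauto

theorem stmt_15 (B m L : ℕ) (hB : 0 < B) (hm : 0 < m) (hL : 0 < L) :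
    Nat.card
        (({x : Fin m → ℤ | (∀ i, 0 ≤ x i) ∧ (∑ i, x i ≤ L) ∧ ∀ i, x i ≤ B} -
          {x : Fin m → ℤ | (∀ i, 0 ≤ x i) ∧ (∑ i, x i ≤ L) ∧ ∀ i, x i ≤ B})) =
      ∑ k ∈ Finset.range (min m L + 1),
        m.choose k *
          Nat.card {x : Fin k → ℕ // (∑ i, x i ≤ L - k) ∧ ∀ i, x i ≤ B - 1} *
          Nat.card {x : Fin (m - k) → ℕ // (∑ i, x i ≤ L) ∧ ∀ i, x i ≤ B} := by
  have hset : {x : Fin m → ℤ | (∀ i, 0 ≤ x i) ∧ (∑ i, x i ≤ L) ∧ ∀ i, x i ≤ B}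
      = (↑(Wz B L m) : Set (Fin m → ℤ)) := by
    ext x
    simp only [Set.mem_setOf_eq, Finset.mem_coe, mem_Wz]
    exact ⟨fun ⟨h1, h2, h3⟩ => ⟨fun i => ⟨h1 i, h3 i⟩, h2⟩,
      fun ⟨h1, h2⟩ => ⟨fun i => (h1 i).1, h2, fun i => (h1 i).2⟩⟩
  rw [hset, ← Finset.coe_sub, Nat.card_coe_set_eq, Set.ncard_coe_finset,
    WsubW B L m, Dz_card B L m hB]
  refine Finset.sum_congr rfl fun k _ => ?_
  rw [Wn_natCard, Wn_natCard]
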